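/- arXiv:1208.6451 — 2 statements merged into one kernel-verified Lean document; each statement's English description precedes it below -/
import Mathlib

section
/- The period of Φ_n is 2^n; that is, the smallest positive integer t for which there exists s in {0,1}^n with Φ_n^t(s) = s equals 2^n. -/
/-- The prefix `(x₁,…,x_m)` (1-indexed) of `x ∈ {0,1}ⁿ` is alternating:
consecutive entries differ. -/
def AltPrefix (n : ℕ) (x : Fin n → Bool) (m : ℕ) : Prop :=
  ∀ j : ℕ, j + 1 < m → ∀ hn : j + 1 < n,
    x ⟨j, Nat.lt_of_succ_lt hn⟩ ≠ x ⟨j + 1, hn⟩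

instance (n : ℕ) (x : Fin n → Bool) : DecidablePred (AltPrefix n x) := fun m =>
  decidable_of_iff
    (∀ j ∈ Finset.range n, j + 1 < m → ∀ hn : j + 1 < n,
      x ⟨j, Nat.lt_of_succ_lt hn⟩ ≠ x ⟨j + 1, hn⟩)
    (by
      constructor
      · intro h j hj hn
        exact h j (Finset.mem_range.mpr (Nat.lt_of_succ_lt hn)) hj hn
      · intro h j _ hj hn
        exact h j hj hn)

/-- The largest `m ≤ n` such that the prefix `(x₁,…,x_m)` is alternating. -/
def mIdx (n : ℕ) (x : Fin n → Bool) : ℕ :=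
  Nat.findGreatest (AltPrefix n x) n

/-- The map `Φₙ : {0,1}ⁿ → {0,1}ⁿ`: with `m` the largest index such that
`(x₁,…,x_m)` is alternating, `yᵢ = 1 - x_m` for `i ≤ m` and `yᵢ = xᵢ` for `i > m`. -/
def Phi (n : ℕ) (x : Fin n → Bool) : Fin n → Bool :=
  fun i =>
    if _h : (i : ℕ) < mIdx n x then
      ! x ⟨mIdx n x - 1, by
        have h2 : mIdx n x ≤ n := Nat.findGreatest_le n
        omega⟩
    else x i

/-- The alternating vector `(…,1,0,1,0)`: `x_j = 1` iff `j ≢ n (mod 2)` (1-indexed). -/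
def altEnd0 (n : ℕ) : Fin n → Bool := fun i => decide (((i : ℕ) + 1) % 2 ≠ n % 2)

/-- The alternating vector `(…,0,1,0,1)`: `x_j = 1` iff `j ≡ n (mod 2)` (1-indexed). -/
def altEnd1 (n : ℕ) : Fin n → Bool := fun i => decide (((i : ℕ) + 1) % 2 = n % 2)

/-- The bit `c_j` (0-indexed `j`): XOR of consecutive bits `x_j, x_{j+1}`,
and for the last position the bit itself. -/
def cbit (n : ℕ) (x : Fin n → Bool) (j : Fin n) : Bool :=
  if h : (j : ℕ) + 1 < n then xor (x j) (x ⟨(j : ℕ) + 1, h⟩) else x j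

/-- The map `rₙ(x) = Σ_{j=1}^n c_j 2^{j-1}`. -/
def rmap (n : ℕ) (x : Fin n → Bool) : ℕ :=
  ∑ j : Fin n, (if cbit n x j then 1 else 0) * 2 ^ (j : ℕ)

/-- The recursively defined weights `w_{n,i,j}` (all indices 1-based; values for
indices outside `1 ≤ i, j ≤ n` are irrelevant junk). -/
def wgt : ℕ → ℕ → ℕ → ℤ
  | 0, _, _ => 0
  | 1, _, _ => -1
  | (n+2), i, j =>
    if i = n + 2 then
      (if j = n + 2 then (n : ℤ)
       else if j % 2 = (n + 2) % 2 then -1 else 1)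
    else if i = n + 1 then
      (if j = n + 2 then -1
       else if j = n + 1 then wgt (n+1) (n+1) j + 1
       else wgt (n+1) (n+1) j)
    else
      (if j = n + 2 then -1
       else if j = n + 1 then wgt (n+1) i j
       else wgt (n+1) i j + wgt n i j)

/-- The recursively defined thresholds `θ_{n,i}`. -/
def thr : ℕ → ℕ → ℤ
  | 0, _ => 0
  | 1, _ => 0
  | (n+2), i =>
    if i = n + 2 then (((n + 2) / 2 : ℕ) : ℤ)
    else if i = n + 1 then thr (n+1) (n+1)
    else thr (n+1) i + thr n i - 1

-- auxiliary

lemma geom2 (k : ℕ) : ∑ j ∈ Finset.range k, 2 ^ j = 2 ^ k - 1 := by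
  induction k with
  | zero => simp
  | succ k ih =>
    have h1 : 1 ≤ 2 ^ k := Nat.one_le_two_pow
    rw [Finset.sum_range_succ, ih, pow_succ]
    omega

def bitsum (n : ℕ) (b : ℕ → Bool) : ℕ :=
  ∑ j ∈ Finset.range n, (if b j then 1 else 0) * 2 ^ j

lemma bitsum_lt (n : ℕ) (b : ℕ → Bool) : bitsum n b < 2 ^ n := by
  have h1 : bitsum n b ≤ ∑ j ∈ Finset.range n, 2 ^ j := by
    apply Finset.sum_le_sum
    intro j _
    split <;> simp
  rw [geom2] at h1
  have h2 : 1 ≤ 2 ^ n := Nat.one_le_two_pow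
  omega

lemma bitsum_succ (n : ℕ) (b : ℕ → Bool) :
    bitsum (n + 1) b = bitsum n b + (if b n then 1 else 0) * 2 ^ n :=
  Finset.sum_range_succ _ n

lemma bitsum_inj : ∀ n (b b' : ℕ → Bool), bitsum n b = bitsum n b' →
    ∀ k, k < n → b k = b' k := by
  intro n
  induction n with
  | zero => intro _ _ _ k hk; omega
  | succ n ih =>
    intro b b' h k hk
    rw [bitsum_succ, bitsum_succ] at h
    have h1 := bitsum_lt n b
    have h2 := bitsum_lt n b'
    have hbn : b n = b' n := by
      cases hb : b n <;> cases hb' : b' n <;> simp [hb, hb'] at h ⊢ <;> omega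
    have heq : bitsum n b = bitsum n b' := by
      rw [hbn] at h; omega
    rcases Nat.lt_or_ge k n with h3 | h3
    · exact ih b b' heq k h3
    · have : k = n := by omega
      rw [this]; exact hbn

lemma rmap_eq (n : ℕ) (x : Fin n → Bool) :
    rmap n x = bitsum n (fun j => if h : j < n then cbit n x ⟨j, h⟩ else false) := by
  rw [rmap, bitsum,
    ← Fin.sum_univ_eq_sum_range
      (fun j => (if (if h : j < n then cbit n x ⟨j, h⟩ else false) then 1 else 0) * 2 ^ j) n]
  apply Finset.sum_congr rfl
  intro j _
  simp [j.isLt]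

lemma rmap_lt (n : ℕ) (x : Fin n → Bool) : rmap n x < 2 ^ n := by
  rw [rmap_eq]; exact bitsum_lt _ _

lemma bitsum_split (n k : ℕ) (b : ℕ → Bool) (h2 : k + 1 ≤ n) :
    bitsum n b = bitsum k b + (if b k then 1 else 0) * 2 ^ k
      + ∑ j ∈ Finset.Ico (k + 1) n, (if b j then 1 else 0) * 2 ^ j := by
  rw [bitsum, Finset.range_eq_Ico, ← Finset.sum_Ico_consecutive _ (Nat.zero_le (k + 1)) h2,
    ← Finset.range_eq_Ico, Finset.sum_range_succ, bitsum]

lemma bitsum_all_true (k : ℕ) (b : ℕ → Bool) (h : ∀ j, j < k → b j = true) :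
    bitsum k b = 2 ^ k - 1 := by
  rw [bitsum, ← geom2]
  apply Finset.sum_congr rfl
  intro j hj
  rw [h j (Finset.mem_range.mp hj)]
  simp

lemma bitsum_all_false (k : ℕ) (b : ℕ → Bool) (h : ∀ j, j < k → b j = false) :
    bitsum k b = 0 := by
  rw [bitsum]
  apply Finset.sum_eq_zero
  intro j hj
  rw [h j (Finset.mem_range.mp hj)]
  simp

lemma altPrefix_one (n : ℕ) (x : Fin n → Bool) : AltPrefix n x 1 := by
  intro j hj
  omega


lemma rmap_phi (n : ℕ) (hn : 0 < n) (x : Fin n → Bool) :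
    rmap n (Phi n x) = (rmap n x + 1) % 2 ^ n := by
  set m := mIdx n x with hmdef
  have hm1 : 1 ≤ m := Nat.le_findGreatest hn (altPrefix_one n x)
  have hmn : m ≤ n := Nat.findGreatest_le n
  have halt : AltPrefix n x m := Nat.findGreatest_spec hn (altPrefix_one n x)
  have hPhi_lt : ∀ (i : Fin n), (i : ℕ) < m → Phi n x i = !x ⟨m - 1, by omega⟩ :=
    fun i h => dif_pos h
  have hPhi_ge : ∀ (i : Fin n), ¬ (i : ℕ) < m → Phi n x i = x i :=
    fun i h => dif_neg h
  have hmax : ∀ (h : m < n), x ⟨m - 1, by omega⟩ = x ⟨m, h⟩ := by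
    intro h
    have hng : ¬ AltPrefix n x (m + 1) :=
      Nat.findGreatest_is_greatest (Nat.lt_succ_self _) (by omega)
    rw [AltPrefix] at hng
    push_neg at hng
    obtain ⟨j, hj1, hjn, hje⟩ := hng
    have hjm : j = m - 1 := by
      by_contra hne
      exact absurd hje (halt j (by omega) hjn)
    subst hjm
    have e : (⟨m - 1 + 1, hjn⟩ : Fin n) = ⟨m, h⟩ := by
      simp only [Fin.mk.injEq]; omega
    rw [e] at hje
    exact hje
  -- cbit facts
  have cA : ∀ j (hj : j + 1 < m) (hjn : j < n), cbit n x ⟨j, hjn⟩ = true := by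
    intro j hj hjn
    have hj1 : j + 1 < n := by omega
    rw [cbit]
    simp only [dif_pos hj1]
    have := halt j hj hj1
    cases h1 : x ⟨j, hjn⟩ <;> cases h2 : x ⟨j + 1, hj1⟩ <;> simp_all
  have cA' : ∀ j (hj : j + 1 < m) (hjn : j < n), cbit n (Phi n x) ⟨j, hjn⟩ = false := by
    intro j hj hjn
    have hj1 : j + 1 < n := by omega
    rw [cbit]
    simp only [dif_pos hj1]
    rw [hPhi_lt ⟨j, hjn⟩ (show j < m by omega), hPhi_lt ⟨j + 1, hj1⟩ (show j + 1 < m by omega)]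
    simp
  have cB : ∀ (h : m < n), cbit n x ⟨m - 1, by omega⟩ = false := by
    intro h
    have hlt : m - 1 + 1 < n := by omega
    rw [cbit]
    simp only [dif_pos hlt]
    have e : (⟨m - 1 + 1, hlt⟩ : Fin n) = ⟨m, h⟩ := by
      simp only [Fin.mk.injEq]; omega
    rw [e, ← hmax h]
    simp
  have cB' : ∀ (h : m < n), cbit n (Phi n x) ⟨m - 1, by omega⟩ = true := by
    intro h
    have hlt : m - 1 + 1 < n := by omega
    rw [cbit]
    simp only [dif_pos hlt]
    have e : (⟨m - 1 + 1, hlt⟩ : Fin n) = ⟨m, h⟩ := by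
      simp only [Fin.mk.injEq]; omega
    rw [e, hPhi_lt ⟨m - 1, by omega⟩ (show m - 1 < m by omega),
      hPhi_ge ⟨m, h⟩ (show ¬ m < m by omega), ← hmax h]
    cases x ⟨m - 1, by omega⟩ <;> simp
  have cC : ∀ j (hj : m ≤ j) (hjn : j < n), cbit n (Phi n x) ⟨j, hjn⟩ = cbit n x ⟨j, hjn⟩ := by
    intro j hj hjn
    rw [cbit, cbit]
    by_cases h1 : j + 1 < n
    · simp only [dif_pos h1]
      rw [hPhi_ge ⟨j, hjn⟩ (show ¬ j < m by omega), hPhi_ge ⟨j + 1, h1⟩ (show ¬ j + 1 < m by omega)]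
    · simp only [dif_neg h1]
      rw [hPhi_ge ⟨j, hjn⟩ (show ¬ j < m by omega)]
  have cD : ∀ (h : m = n), cbit n x ⟨m - 1, by omega⟩ = x ⟨m - 1, by omega⟩ ∧
      cbit n (Phi n x) ⟨m - 1, by omega⟩ = !x ⟨m - 1, by omega⟩ := by
    intro h
    have hne : ¬ (m - 1 + 1 < n) := by omega
    constructor
    · rw [cbit]; simp only [dif_neg hne]
    · rw [cbit]; simp only [dif_neg hne]
      rw [hPhi_lt ⟨m - 1, by omega⟩ (show m - 1 < m by omega)]
  -- bitsum computation
  rw [rmap_eq, rmap_eq]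
  set b : ℕ → Bool := fun j => if h : j < n then cbit n x ⟨j, h⟩ else false with hb
  set b' : ℕ → Bool := fun j => if h : j < n then cbit n (Phi n x) ⟨j, h⟩ else false with hb'
  have hsplit := bitsum_split n (m - 1) b (by omega)
  have hsplit' := bitsum_split n (m - 1) b' (by omega)
  have hlow : bitsum (m - 1) b = 2 ^ (m - 1) - 1 := by
    apply bitsum_all_true
    intro j hj
    rw [hb]
    simp only [dif_pos (show j < n by omega)]
    exact cA j (by omega) (by omega)
  have hlow' : bitsum (m - 1) b' = 0 := by
    apply bitsum_all_false
    intro j hj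
    rw [hb']
    simp only [dif_pos (show j < n by omega)]
    exact cA' j (by omega) (by omega)
  have hT : ∑ j ∈ Finset.Ico (m - 1 + 1) n, (if b' j then 1 else 0) * 2 ^ j
      = ∑ j ∈ Finset.Ico (m - 1 + 1) n, (if b j then 1 else 0) * 2 ^ j := by
    apply Finset.sum_congr rfl
    intro j hj
    rw [Finset.mem_Ico] at hj
    have hjn : j < n := hj.2
    rw [hb, hb']
    simp only [dif_pos hjn]
    rw [cC j (by omega) hjn]
  have hp1 : (1 : ℕ) ≤ 2 ^ (m - 1) := Nat.one_le_two_pow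
  have hblt := bitsum_lt n b
  have hblt' := bitsum_lt n b'
  rcases Nat.lt_or_ge m n with hmlt | hmge
  · -- m < n
    have hbk : b (m - 1) = false := by
      rw [hb]; simp only [dif_pos (show m - 1 < n by omega)]; exact cB hmlt
    have hbk' : b' (m - 1) = true := by
      rw [hb']; simp only [dif_pos (show m - 1 < n by omega)]; exact cB' hmlt
    have hval : bitsum n b' = bitsum n b + 1 := by
      rw [hsplit, hsplit', hlow, hlow', hbk, hbk', hT]
      simp
      omega
    rw [Nat.mod_eq_of_lt (hval ▸ hblt'), hval]
  · -- m = n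
    have hme : m = n := by omega
    have hTzero : ∑ j ∈ Finset.Ico (m - 1 + 1) n, (if b j then 1 else 0) * 2 ^ j = 0 := by
      rw [show m - 1 + 1 = n by omega, Finset.Ico_self, Finset.sum_empty]
    have hTzero' : ∑ j ∈ Finset.Ico (m - 1 + 1) n, (if b' j then 1 else 0) * 2 ^ j = 0 := by
      rw [hT, hTzero]
    obtain ⟨hD1, hD2⟩ := cD hme
    have hbk : b (m - 1) = x ⟨m - 1, by omega⟩ := by
      rw [hb]; simp only [dif_pos (show m - 1 < n by omega)]; exact hD1
    have hbk' : b' (m - 1) = !x ⟨m - 1, by omega⟩ := by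
      rw [hb']; simp only [dif_pos (show m - 1 < n by omega)]; exact hD2
    have h2n : 2 ^ n = 2 * 2 ^ (m - 1) := by
      rw [show n = (m - 1) + 1 by omega, pow_succ]; ring
    cases hx : x ⟨m - 1, by omega⟩
    · have h0 : bitsum n b = 2 ^ (m - 1) - 1 := by
        rw [hsplit, hlow, hbk, hx, hTzero]; simp
      have h0' : bitsum n b' = 2 ^ (m - 1) := by
        rw [hsplit', hlow', hbk', hx, hTzero']; simp
      rw [h0, h0', Nat.mod_eq_of_lt (by omega)]
      omega
    · have h0 : bitsum n b = 2 ^ n - 1 := by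
        rw [hsplit, hlow, hbk, hx, hTzero]; simp; omega
      have h0' : bitsum n b' = 0 := by
        rw [hsplit', hlow', hbk', hx, hTzero']; simp
      rw [h0, h0', show 2 ^ n - 1 + 1 = 2 ^ n by omega, Nat.mod_self]

lemma rmap_iter (n : ℕ) (hn : 0 < n) (x : Fin n → Bool) (t : ℕ) :
    rmap n ((Phi n)^[t] x) = (rmap n x + t) % 2 ^ n := by
  induction t with
  | zero => simp [Nat.mod_eq_of_lt (rmap_lt n x)]
  | succ t ih =>
    rw [Function.iterate_succ_apply', rmap_phi n hn, ih, Nat.mod_add_mod, ← Nat.add_assoc]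

lemma rmap_inj (n : ℕ) (x x' : Fin n → Bool) (h : rmap n x = rmap n x') : x = x' := by
  rw [rmap_eq, rmap_eq] at h
  have hc : ∀ j (hj : j < n), cbit n x ⟨j, hj⟩ = cbit n x' ⟨j, hj⟩ := by
    intro j hj
    have := bitsum_inj n _ _ h j hj
    simpa [hj] using this
  have key : ∀ d j (hj : j < n), n = j + d + 1 → x ⟨j, hj⟩ = x' ⟨j, hj⟩ := by
    intro d
    induction d with
    | zero =>
      intro j hj h0
      have hne : ¬ (j + 1 < n) := by omega
      have := hc j hj
      rw [cbit, cbit, dif_neg hne, dif_neg hne] at this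
      exact this
    | succ d ih =>
      intro j hj h0
      have h1 : j + 1 < n := by omega
      have := hc j hj
      rw [cbit, cbit, dif_pos h1, dif_pos h1] at this
      have h2 := ih (j + 1) h1 (by omega)
      rw [h2] at this
      cases hx : x' ⟨j + 1, h1⟩ <;> rw [hx] at this <;>
        cases ha : x ⟨j, hj⟩ <;> cases hb : x' ⟨j, hj⟩ <;> simp_all
  funext i
  have := key (n - 1 - (i : ℕ)) i i.isLt (by omega)
  simpa using this

/-- The period of `Φₙ` — the smallest positive `t` such that `Φₙᵗ(s) = s`
for some `s ∈ {0,1}ⁿ` — equals `2ⁿ`. -/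
theorem Phi_period (n : ℕ) (hn : 0 < n) :
    IsLeast {t : ℕ | 0 < t ∧ ∃ s : Fin n → Bool, (Phi n)^[t] s = s} (2 ^ n) := by
  constructor
  · refine ⟨Nat.pow_pos (by norm_num), fun _ => false, ?_⟩
    apply rmap_inj
    rw [rmap_iter n hn, Nat.add_mod_right, Nat.mod_eq_of_lt (rmap_lt n _)]
  · rintro t ⟨ht, s, hs⟩
    have h1 := rmap_iter n hn s t
    rw [hs] at h1
    have hr := rmap_lt n s
    have hdvd : 2 ^ n ∣ t := by
      have h2 : (rmap n s + t) % 2 ^ n = (rmap n s + 0) % 2 ^ n := by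
        rw [← h1, Nat.add_zero, Nat.mod_eq_of_lt hr]
      have h3 : t ≡ 0 [MOD 2 ^ n] := Nat.ModEq.add_left_cancel' (rmap n s) h2.symm.symm
      exact (Nat.modEq_zero_iff_dvd).mp h3
    exact Nat.le_of_dvd ht hdvd
end

section
/- The trajectory of (0,…,0) under Φ_{n+1} is obtained from the trajectory of (0,…,0) under Φ_n as follows: writing T for the sequence of 2^n vectors obtained by appending a 0 to each vector Φ_n^t(0,…,0) (t = 0,…,2^n−1), and T̄ for the sequence obtained by complementing every bit of every vector of T, the sequence Φ_{n+1}^t(0,…,0) for t = 0,…,2^{n+1}−1 equals the concatenation T followed by T̄. -/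
-- auxiliary lemmas, to be inserted before the theorem
section Aux

lemma snoc_lt {n : ℕ} (p : Fin n → Bool) (b : Bool) (j : ℕ) (hj : j < n) (hj' : j < n + 1) :
    (Fin.snoc p b : Fin (n + 1) → Bool) ⟨j, hj'⟩ = p ⟨j, hj⟩ := by
  have : (⟨j, hj'⟩ : Fin (n + 1)) = Fin.castSucc ⟨j, hj⟩ := rfl
  rw [this, Fin.snoc_castSucc]

lemma snoc_last' {n : ℕ} (p : Fin n → Bool) (b : Bool) (h : n < n + 1) :
    (Fin.snoc p b : Fin (n + 1) → Bool) ⟨n, h⟩ = b := by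
  have : (⟨n, h⟩ : Fin (n + 1)) = Fin.last n := rfl
  rw [this, Fin.snoc_last]

lemma altPrefix_snoc {n m : ℕ} (x : Fin n → Bool) (b : Bool) (hm : m ≤ n) :
    AltPrefix (n + 1) (Fin.snoc x b) m ↔ AltPrefix n x m := by
  constructor
  · intro h j hj hn'
    have h1 := h j hj (by omega)
    rwa [snoc_lt x b j (by omega), snoc_lt x b (j+1) (by omega)] at h1
  · intro h j hj hn'
    have hjn : j + 1 < n := by omega
    rw [snoc_lt x b j (by omega), snoc_lt x b (j+1) hjn]
    exact h j hj hjn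

lemma mIdx_le (n : ℕ) (x : Fin n → Bool) : mIdx n x ≤ n := Nat.findGreatest_le n

lemma mIdx_pos {n : ℕ} (hn : 0 < n) (x : Fin n → Bool) : 1 ≤ mIdx n x :=
  Nat.le_findGreatest hn (altPrefix_one n x)

lemma altPrefix_mIdx {n : ℕ} (hn : 0 < n) (x : Fin n → Bool) :
    AltPrefix n x (mIdx n x) :=
  Nat.findGreatest_spec hn (altPrefix_one n x)

lemma phi_apply_lt {n : ℕ} (x : Fin n → Bool) (m : ℕ) (hm : mIdx n x = m)
    (hmn : m ≤ n) (hmpos : 1 ≤ m) (i : Fin n) (h : (i : ℕ) < m) :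
    Phi n x i = ! x ⟨m - 1, by omega⟩ := by
  subst hm
  unfold Phi
  rw [dif_pos h]

lemma phi_apply_ge {n : ℕ} (x : Fin n → Bool) (m : ℕ) (hm : mIdx n x = m)
    (i : Fin n) (h : ¬ (i : ℕ) < m) :
    Phi n x i = x i := by
  subst hm
  unfold Phi
  rw [dif_neg h]

lemma mIdx_snoc {n : ℕ} (hn : 0 < n) (x : Fin n → Bool)
    (hx : ¬ AltPrefix (n + 1) (Fin.snoc x false) (n + 1)) :
    mIdx (n + 1) (Fin.snoc x false) = mIdx n x := by
  apply le_antisymm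
  · by_contra hlt
    push_neg at hlt
    have hk1 : AltPrefix (n + 1) (Fin.snoc x false) (mIdx (n + 1) (Fin.snoc x false)) :=
      altPrefix_mIdx (by omega) _
    have hle := mIdx_le (n + 1) (Fin.snoc x false)
    by_cases h : mIdx (n + 1) (Fin.snoc x false) = n + 1
    · have hk2 := hk1
      rw [h] at hk2
      exact hx hk2
    · have hkn : mIdx (n + 1) (Fin.snoc x false) ≤ n := by omega
      have h5 := Nat.le_findGreatest hkn ((altPrefix_snoc x false hkn).mp hk1)
      have h6 : mIdx n x = Nat.findGreatest (AltPrefix n x) n := rfl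
      omega
  · have h7 : mIdx (n + 1) (Fin.snoc x false)
        = Nat.findGreatest (AltPrefix (n + 1) (Fin.snoc x false)) (n + 1) := rfl
    rw [h7]
    exact Nat.le_findGreatest (by have := mIdx_le n x; omega)
      ((altPrefix_snoc x false (mIdx_le n x)).mpr (altPrefix_mIdx hn x))

lemma phi_snoc {n : ℕ} (hn : 0 < n) (x : Fin n → Bool)
    (hx : ¬ AltPrefix (n + 1) (Fin.snoc x false) (n + 1)) :
    Phi (n + 1) (Fin.snoc x false) = Fin.snoc (Phi n x) false := by
  have hm := mIdx_snoc hn x hx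
  have hmle := mIdx_le n x
  have hmpos := mIdx_pos hn x
  funext i
  by_cases hi : (i : ℕ) < mIdx n x
  · rw [phi_apply_lt _ (mIdx n x) hm (by omega) (by omega) i hi]
    have h1 : mIdx n x - 1 < n := by omega
    rw [snoc_lt x false _ h1]
    have hin : (i : ℕ) < n := by omega
    have hieq : i = (⟨(i : ℕ), by omega⟩ : Fin (n+1)) := by ext; rfl
    rw [hieq, snoc_lt (Phi n x) false _ hin,
      phi_apply_lt x (mIdx n x) rfl hmle hmpos _ hi]
  · rw [phi_apply_ge _ (mIdx n x) hm i hi]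
    by_cases hin : (i : ℕ) < n
    · have hieq : i = (⟨(i : ℕ), by omega⟩ : Fin (n+1)) := by ext; rfl
      rw [hieq, snoc_lt (Phi n x) false _ hin, snoc_lt x false _ hin,
        phi_apply_ge x (mIdx n x) rfl _ hi]
    · have hi' : (i : ℕ) = n := by omega
      have hieq : i = (⟨n, by omega⟩ : Fin (n+1)) := by ext; exact hi'
      rw [hieq, snoc_last', snoc_last']

lemma altPrefix_compl {n m : ℕ} (x : Fin n → Bool) :
    AltPrefix n (fun i => ! x i) m ↔ AltPrefix n x m := by
  constructor <;> intro h j hj hn' <;> have := h j hj hn' <;> simp_all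

lemma mIdx_compl {n : ℕ} (hn : 0 < n) (x : Fin n → Bool) :
    mIdx n (fun i => ! x i) = mIdx n x := by
  apply le_antisymm
  · exact Nat.le_findGreatest (mIdx_le _ _)
      ((altPrefix_compl x).mp (altPrefix_mIdx hn _))
  · exact Nat.le_findGreatest (mIdx_le _ _)
      ((altPrefix_compl x).mpr (altPrefix_mIdx hn _))

lemma phi_compl {n : ℕ} (hn : 0 < n) (x : Fin n → Bool) :
    Phi n (fun i => ! x i) = fun i => ! Phi n x i := by
  have hmle := mIdx_le n x
  have hmpos := mIdx_pos hn x
  funext i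
  by_cases hi : (i : ℕ) < mIdx n x
  · rw [phi_apply_lt _ (mIdx n x) (mIdx_compl hn x) hmle hmpos i hi,
      phi_apply_lt x (mIdx n x) rfl hmle hmpos i hi]
  · rw [phi_apply_ge _ (mIdx n x) (mIdx_compl hn x) i hi,
      phi_apply_ge x (mIdx n x) rfl i hi]

lemma full_alt_eq {n : ℕ} (hn : 0 < n) (x : Fin n → Bool)
    (h : AltPrefix (n + 1) (Fin.snoc x false) (n + 1)) : x = altEnd1 n := by
  have key : ∀ k, k ≤ n → (Fin.snoc x false : Fin (n+1) → Bool) ⟨n - k, by omega⟩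
      = decide (k % 2 = 1) := by
    intro k
    induction k with
    | zero =>
      intro _
      simp only [Nat.sub_zero]
      rw [snoc_last']
      simp
    | succ k ih =>
      intro hk
      have hkn : k ≤ n := by omega
      have h1 := ih hkn
      have hj : n - (k + 1) + 1 = n - k := by omega
      have h2 := h (n - (k + 1)) (by omega) (by omega)
      rw [show (⟨n - (k+1) + 1, by omega⟩ : Fin (n+1)) = ⟨n - k, by omega⟩ by simp only [Fin.mk.injEq]; omega] at h2
      rw [h1] at h2
      rcases Bool.eq_false_or_eq_true (decide ((k+1) % 2 = 1)) with hb | hb <;>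
        rcases Bool.eq_false_or_eq_true ((Fin.snoc x false : Fin (n+1) → Bool) ⟨n - (k+1), by omega⟩) with hb' | hb' <;>
        simp_all <;> omega
  funext j
  have hjn : (j : ℕ) < n := j.isLt
  have hk : n - (n - (j : ℕ)) = (j : ℕ) := by omega
  have := key (n - (j : ℕ)) (by omega)
  rw [show (⟨n - (n - (j:ℕ)), by omega⟩ : Fin (n+1)) = ⟨(j:ℕ), by omega⟩ by simp only [Fin.mk.injEq]; omega] at this
  rw [snoc_lt x false _ hjn] at this
  rw [show (⟨(j:ℕ), hjn⟩ : Fin n) = j by ext; rfl] at this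
  rw [this]
  unfold altEnd1
  congr 1
  rw [eq_iff_iff]
  omega

lemma alt_snoc_altEnd1 {n : ℕ} (hn : 0 < n) :
    AltPrefix (n + 1) (Fin.snoc (altEnd1 n) false) (n + 1) := by
  intro j hj hn'
  by_cases hjn : j + 1 < n
  · rw [snoc_lt _ false j (by omega), snoc_lt _ false (j+1) hjn]
    unfold altEnd1
    simp only [ne_eq, decide_eq_decide]
    omega
  · have hj1 : j + 1 = n := by omega
    rw [show (⟨j+1, hn'⟩ : Fin (n+1)) = ⟨n, by omega⟩ by simp only [Fin.mk.injEq]; omega, snoc_last',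
      snoc_lt _ false j (by omega)]
    unfold altEnd1
    simp [hj1]

lemma phi_snoc_altEnd1 {n : ℕ} (hn : 0 < n) :
    Phi (n + 1) (Fin.snoc (altEnd1 n) false) = fun _ => true := by
  have hm : mIdx (n + 1) (Fin.snoc (altEnd1 n) false) = n + 1 :=
    le_antisymm (mIdx_le _ _) (Nat.le_findGreatest le_rfl (alt_snoc_altEnd1 hn))
  funext i
  rw [phi_apply_lt _ (n + 1) hm le_rfl (by omega) i (by omega)]
  rw [show (⟨n + 1 - 1, by omega⟩ : Fin (n+1)) = ⟨n, by omega⟩ by simp only [Fin.mk.injEq]; omega, snoc_last']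
  rfl

lemma snoc_false_const {n : ℕ} :
    (Fin.snoc (fun _ => false) false : Fin (n + 1) → Bool) = fun _ => false := by
  funext i
  induction i using Fin.lastCases with
  | last => exact Fin.snoc_last _ _
  | cast j => exact Fin.snoc_castSucc _ _ _

lemma compl_snoc_altEnd1 {n : ℕ} :
    (fun i => ! (Fin.snoc (altEnd1 n) false : Fin (n + 1) → Bool) i) = altEnd1 (n + 1) := by
  funext i
  induction i using Fin.lastCases with
  | last =>
    simp only [Fin.snoc_last]
    unfold altEnd1
    simp [Fin.val_last]
  | cast j =>
    simp only [Fin.snoc_castSucc]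
    unfold altEnd1
    simp only [Fin.coe_castSucc, Bool.not_eq_true', ← decide_not, decide_eq_decide]
    omega

def Traj (n : ℕ) (t : ℕ) : Fin n → Bool := (Phi n)^[t] (fun _ => false)

def Qprop (n : ℕ) : Prop :=
  (∀ t, t < 2 ^ n - 1 → Traj n t ≠ altEnd1 n) ∧ Traj n (2 ^ n - 1) = altEnd1 n

lemma traj_of_Q {n : ℕ} (hn : 0 < n) (hQ : Qprop n) :
    ∀ t, t < 2 ^ (n + 1) →
      Traj (n + 1) t =
        if t < 2 ^ n then Fin.snoc (Traj n t) false
        else fun i => ! (Fin.snoc (Traj n (t - 2 ^ n)) false : Fin (n+1) → Bool) i := by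
  have h2 : 1 ≤ 2 ^ n := Nat.one_le_two_pow
  intro t
  induction t with
  | zero =>
    intro _
    rw [if_pos (by omega)]
    simp only [Traj, Function.iterate_zero, id_eq]
    exact snoc_false_const.symm
  | succ t ih =>
    intro ht
    have ih' := ih (by omega)
    have hstep : Traj (n+1) (t+1) = Phi (n+1) (Traj (n+1) t) := by
      simp [Traj, Function.iterate_succ_apply']
    by_cases h1 : t + 1 < 2 ^ n
    · rw [if_pos h1, hstep, ih', if_pos (by omega)]
      have hne : ¬ AltPrefix (n + 1) (Fin.snoc (Traj n t) false) (n + 1) := by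
        intro hc
        exact hQ.1 t (by omega) (full_alt_eq hn _ hc)
      rw [phi_snoc hn _ hne]
      congr 1
      simp [Traj, Function.iterate_succ_apply']
    · by_cases h2' : t + 1 = 2 ^ n
      · rw [if_neg (by omega), hstep, ih', if_pos (by omega)]
        rw [show t = 2 ^ n - 1 by omega, hQ.2, phi_snoc_altEnd1 hn]
        rw [show 2 ^ n - 1 + 1 - 2 ^ n = 0 by omega]
        funext i
        simp [Traj, snoc_false_const]
      · -- t ≥ 2 ^ n
        rw [if_neg (by omega), hstep, ih', if_neg (by omega)]
        have hlt : t - 2 ^ n < 2 ^ n - 1 := by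
          have : 2 ^ (n + 1) = 2 * 2 ^ n := by ring
          omega
        have hne : ¬ AltPrefix (n + 1) (Fin.snoc (Traj n (t - 2 ^ n)) false) (n + 1) := by
          intro hc
          exact hQ.1 _ hlt (full_alt_eq hn _ hc)
        rw [phi_compl (by omega) _, phi_snoc hn _ hne]
        have : t + 1 - 2 ^ n = (t - 2 ^ n) + 1 := by omega
        rw [this]
        congr 2
        simp [Traj, Function.iterate_succ_apply']

lemma Q_succ {n : ℕ} (hn : 0 < n) (hQ : Qprop n) : Qprop (n + 1) := by
  have h2 : 1 ≤ 2 ^ n := Nat.one_le_two_pow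
  have htraj := traj_of_Q hn hQ
  constructor
  · intro t ht hc
    have h2' : 2 ^ (n + 1) = 2 * 2 ^ n := by ring
    have := htraj t (by omega)
    by_cases h1 : t < 2 ^ n
    · rw [if_pos h1] at this
      rw [this] at hc
      have := congrFun hc (Fin.last n)
      rw [Fin.snoc_last] at this
      unfold altEnd1 at this
      simp [Fin.val_last] at this
    · rw [if_neg h1] at this
      rw [this] at hc
      rw [← compl_snoc_altEnd1] at hc
      have heq : (Fin.snoc (Traj n (t - 2 ^ n)) false : Fin (n+1) → Bool)
          = Fin.snoc (altEnd1 n) false := by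
        funext i
        have := congrFun hc i
        simp only [Bool.not_inj_iff] at this
        exact this
      have : Traj n (t - 2 ^ n) = altEnd1 n := by
        funext j
        have := congrFun heq (Fin.castSucc j)
        rwa [Fin.snoc_castSucc, Fin.snoc_castSucc] at this
      exact hQ.1 (t - 2 ^ n) (by omega) this
  · have h2' : 2 ^ (n + 1) = 2 * 2 ^ n := by ring
    have := htraj (2 ^ (n + 1) - 1) (by omega)
    rw [if_neg (by omega)] at this
    have hsub : 2 ^ (n + 1) - 1 - 2 ^ n = 2 ^ n - 1 := by omega
    rw [hsub, hQ.2] at this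
    rw [this, compl_snoc_altEnd1]

lemma Q_one : Qprop 1 := by
  constructor
  · intro t ht
    have : t = 0 := by omega
    subst this
    simp only [Traj, Function.iterate_zero, id_eq]
    intro hc
    have := congrFun hc ⟨0, by omega⟩
    unfold altEnd1 at this
    simp at this
  · show Traj 1 1 = altEnd1 1
    simp only [Traj, Function.iterate_one]
    decide

lemma Q_all (n : ℕ) (hn : 0 < n) : Qprop n := by
  induction n with
  | zero => omega
  | succ n ih =>
    rcases Nat.eq_zero_or_pos n with h | h
    · subst h; exact Q_one
    · exact Q_succ h (ih h)

end Aux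

/-- The trajectory of `(0,…,0)` under `Φ_{n+1}` is the concatenation `T T̄`, where
`T` appends a `0` to each point of the trajectory of `(0,…,0)` under `Φₙ` and `T̄`
complements every bit of every vector of `T`. -/
theorem Phi_succ_trajectory (n : ℕ) (hn : 0 < n) (t : ℕ) (ht : t < 2 ^ (n + 1)) :
    (Phi (n + 1))^[t] (fun _ => false) =
      if t < 2 ^ n then
        Fin.snoc ((Phi n)^[t] (fun _ => false)) false
      else
        fun i => ! ((Fin.snoc ((Phi n)^[t - 2 ^ n] (fun _ => false)) false : Fin (n + 1) → Bool) i) := by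
  have := traj_of_Q hn (Q_all n hn) t ht
  simpa [Traj] using this
end
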